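/- Let D be an integral domain with fraction field K, and let f(x,y) = f₀xⁿ + ⋯ + f_nyⁿ be a binary form of degree n with coefficients in D, with f₀ ≠ 0 and f(x,1) separable over K. Let a ∈ D and let h(x) ∈ D[x] be the unique polynomial with f(x,1) − f(a,1) = (x − a)·h(x). Then in L the identity h(θ) = ζ_{n−1} + a·ζ_{n−2} + a²·ζ_{n−3} + ⋯ + a^{n−2}·ζ₁ + h(0) holds; in particular h(θ) lies in R_f. -/

import Mathlib

open Polynomial

noncomputable def fxOne {n : ℕ} {R : Type*} [CommRing R] (f : Fin (n+1) → R) : R[X] :=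
  ∑ i : Fin (n+1), C (f i) * X ^ (n - (i:ℕ))

variable {D : Type*} [CommRing D] [IsDomain D]

/-- The monic polynomial `g(x) = f(x,1)/f₀` over the fraction field `K` of `D`. -/
noncomputable def gPoly {n : ℕ} (f : Fin (n+1) → D) : (FractionRing D)[X] :=
  C ((algebraMap D (FractionRing D) (f 0))⁻¹) * (fxOne f).map (algebraMap D (FractionRing D))

/-- The algebra `L = K[x]/(g(x))`. -/
noncomputable abbrev LD {n : ℕ} (f : Fin (n+1) → D) : Type _ := AdjoinRoot (gPoly f)

/-- `θ`, the image of `x` in `L`. -/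
noncomputable def theta {n : ℕ} (f : Fin (n+1) → D) : LD f := AdjoinRoot.root (gPoly f)

/-- `ζ_k = f₀θ^k + f₁θ^{k-1} + ⋯ + f_{k-1}θ ∈ L`. -/
noncomputable def zeta {n : ℕ} (f : Fin (n+1) → D) (k : ℕ) : LD f :=
  ∑ j ∈ Finset.range k,
    algebraMap D (LD f) (if h : j < n + 1 then f ⟨j, h⟩ else 0) * theta f ^ (k - j)

/-- The `D`-submodule `R_f` of `L`, with basis `{1, ζ₁, …, ζ_{n−1}}`. -/
noncomputable def Rf {n : ℕ} (f : Fin (n+1) → D) : Submodule D (LD f) :=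
  Submodule.span D ({1} ∪ {x : LD f | ∃ k, 1 ≤ k ∧ k ≤ n - 1 ∧ x = zeta f k})

/-- The `D`-submodule `I_f(k)` of `L`, with basis `{1, θ, …, θ^k, ζ_{k+1}, …, ζ_{n−1}}`. -/
noncomputable def If {n : ℕ} (f : Fin (n+1) → D) (k : ℕ) : Submodule D (LD f) :=
  Submodule.span D ({x : LD f | ∃ i ≤ k, x = theta f ^ i} ∪
    {x : LD f | ∃ j, k + 1 ≤ j ∧ j ≤ n - 1 ∧ x = zeta f j})


theorem stmt12 (n : ℕ) (f : Fin (n+1) → D) (hf0 : f 0 ≠ 0)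
    (hsep : ((fxOne f).map (algebraMap D (FractionRing D))).Separable)
    (a : D) (h : D[X])
    (hh : fxOne f - C ((fxOne f).eval a) = (X - C a) * h) :
    Polynomial.aeval (theta f) h =
      (∑ j ∈ Finset.range (n - 1), algebraMap D (LD f) (a ^ j) * zeta f (n - 1 - j)) +
        algebraMap D (LD f) (h.eval 0) ∧
    Polynomial.aeval (theta f) h ∈ Rf f := by
  classical
  set θ : LD f := theta f with hθdef
  set φ : ℕ → D := fun t => if ht : t < n + 1 then f ⟨t, ht⟩ else 0 with hφ
  have hφ' : ∀ i : Fin (n+1), φ (i : ℕ) = f i := fun i => by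
    simp [hφ, i.isLt, not_lt.mpr (Nat.lt_succ_iff.mp i.isLt)]
  have hfx : fxOne f = ∑ i ∈ Finset.range (n+1), C (φ i) * X ^ (n - i) := by
    rw [fxOne, ← Fin.sum_univ_eq_sum_range (fun i => C (φ i) * X ^ (n - i)) (n+1)]
    exact Finset.sum_congr rfl fun i _ => by rw [hφ' i]
  set H : D[X] := ∑ i ∈ Finset.range (n+1),
      C (φ i) * ∑ s ∈ Finset.range (n - i), X ^ s * C a ^ (n - i - 1 - s) with hH
  have key : (X - C a) * H = fxOne f - C ((fxOne f).eval a) := by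
    rw [hH, Finset.mul_sum]
    have h1 : ∀ i ∈ Finset.range (n+1),
        (X - C a) * (C (φ i) * ∑ s ∈ Finset.range (n - i), X ^ s * C a ^ (n - i - 1 - s))
          = C (φ i) * X ^ (n - i) - C (φ i) * C a ^ (n - i) := by
      intro i _
      rw [mul_left_comm, mul_comm (X - C a), geom_sum₂_mul, mul_sub]
    rw [Finset.sum_congr rfl h1, Finset.sum_sub_distrib, hfx]
    congr 1
    rw [eval_finset_sum, map_sum]
    exact Finset.sum_congr rfl fun i _ => by
      rw [eval_mul, eval_pow, eval_C, eval_X, map_mul, map_pow]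
  have hhH : h = H := mul_left_cancel₀ (X_sub_C_ne_zero a) (by rw [← hh, key])
  set α : LD f := algebraMap D (LD f) a with hα
  set ψ : ℕ → LD f := fun t => algebraMap D (LD f) (φ t) with hψ
  have haeval : Polynomial.aeval θ h
      = ∑ i ∈ Finset.range (n+1), ψ i * ∑ s ∈ Finset.range (n - i),
          θ ^ s * α ^ (n - i - 1 - s) := by
    rw [hhH, hH]
    simp [map_sum, map_mul, map_pow, hψ, hα]
  have h0 : h.eval 0 = ∑ i ∈ Finset.range n, φ i * a ^ (n - 1 - i) := by
    rw [hhH, hH]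
    simp only [eval_finset_sum, eval_mul, eval_C, eval_pow, eval_X]
    rw [Finset.sum_range_succ]
    simp only [Nat.sub_self, Finset.range_zero, Finset.sum_empty, mul_zero, add_zero]
    refine Finset.sum_congr rfl fun i hi => ?_
    have hi' : i < n := Finset.mem_range.mp hi
    have hm : n - i = (n - i - 1) + 1 := by omega
    rw [hm, Finset.sum_range_succ']
    have hz : ∀ s ∈ Finset.range (n - i - 1), (0:D) ^ (s+1) * a ^ (n - i - 1 + 1 - 1 - (s+1)) = 0 := by
      intro s _; simp [pow_succ]
    rw [Finset.sum_congr rfl hz]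
    simp only [Finset.sum_const_zero, zero_add, pow_zero, one_mul]
    congr 2 <;> omega
  have hzeta : ∀ k, zeta f k = ∑ t ∈ Finset.range k, ψ t * θ ^ (k - t) := by
    intro k; rw [zeta]
  have core : (∑ i ∈ Finset.range (n+1), ψ i * ∑ s ∈ Finset.range (n - i),
          θ ^ s * α ^ (n - i - 1 - s))
      = (∑ j ∈ Finset.range (n-1), algebraMap D (LD f) (a ^ j) * zeta f (n - 1 - j))
        + algebraMap D (LD f) (h.eval 0) := by
    have hrhs2 : algebraMap D (LD f) (h.eval 0) = ∑ i ∈ Finset.range n, ψ i * α ^ (n - 1 - i) := by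
      rw [h0, map_sum]
      exact Finset.sum_congr rfl fun i _ => by rw [map_mul, map_pow]
    have hrhs1 : ∀ j ∈ Finset.range (n-1), algebraMap D (LD f) (a ^ j) * zeta f (n - 1 - j)
        = ∑ t ∈ Finset.range (n - 1 - j), α ^ j * (ψ t * θ ^ (n - 1 - j - t)) := by
      intro j _
      rw [hzeta, map_pow, Finset.mul_sum]
    rw [hrhs2, Finset.sum_congr rfl hrhs1]
    -- split off the s = 0 terms on the left
    have hsplit : ∀ i ∈ Finset.range (n+1),
        ψ i * ∑ s ∈ Finset.range (n - i), θ ^ s * α ^ (n - i - 1 - s)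
          = (∑ s ∈ Finset.Ico 1 (n - i), ψ i * (θ ^ s * α ^ (n - i - 1 - s)))
            + (if i < n then ψ i * α ^ (n - 1 - i) else 0) := by
      intro i hi
      rcases Nat.lt_or_ge i n with hin | hin
      · rw [if_pos hin,
          Finset.sum_range_eq_add_Ico _ (show 0 < n - i by omega)]
        rw [mul_add, Finset.mul_sum]
        have : n - i - 1 - 0 = n - 1 - i := by omega
        rw [this, pow_zero, one_mul, add_comm]
      · have : n - i = 0 := by omega
        rw [if_neg (by omega), this]
        simp
    rw [Finset.sum_congr rfl hsplit, Finset.sum_add_distrib]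
    congr 1
    · -- the double-sum reindexing
      rw [Finset.sum_sigma', Finset.sum_sigma']
      refine Finset.sum_nbij' (fun p => ⟨n - 1 - p.1 - p.2, p.1⟩)
        (fun q => ⟨q.2, n - 1 - q.1 - q.2⟩) ?_ ?_ ?_ ?_ ?_
      · rintro ⟨i, s⟩ hm
        simp only [Finset.mem_sigma, Finset.mem_range, Finset.mem_Ico] at hm ⊢
        omega
      · rintro ⟨j, t⟩ hm
        simp only [Finset.mem_sigma, Finset.mem_range, Finset.mem_Ico] at hm ⊢
        omega
      · rintro ⟨i, s⟩ hm
        simp only [Finset.mem_sigma, Finset.mem_range, Finset.mem_Ico] at hm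
        exact Sigma.ext (by simp only; try omega) (heq_of_eq (by simp only; try omega))
      · rintro ⟨j, t⟩ hm
        simp only [Finset.mem_sigma, Finset.mem_range, Finset.mem_Ico] at hm
        exact Sigma.ext (by simp only; try omega) (heq_of_eq (by simp only; try omega))
      · rintro ⟨i, s⟩ hm
        simp only [Finset.mem_sigma, Finset.mem_range, Finset.mem_Ico] at hm
        dsimp only
        have e1 : n - 1 - (n - 1 - i - s) - i = s := by omega
        have e2 : n - i - 1 - s = n - 1 - i - s := by omega
        rw [e1, e2]
        ring
    · -- the constant parts
      rw [Finset.sum_range_succ, if_neg (lt_irrefl n), add_zero]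
      exact Finset.sum_congr rfl fun i hi => if_pos (Finset.mem_range.mp hi)
  have formula : Polynomial.aeval θ h
      = (∑ j ∈ Finset.range (n-1), algebraMap D (LD f) (a ^ j) * zeta f (n - 1 - j))
        + algebraMap D (LD f) (h.eval 0) := haeval.trans core
  refine ⟨formula, ?_⟩
  rw [formula]
  refine Submodule.add_mem _ (Submodule.sum_mem _ fun j hj => ?_) ?_
  · have hj' : j < n - 1 := Finset.mem_range.mp hj
    rw [← Algebra.smul_def]
    refine Submodule.smul_mem _ _ (Submodule.subset_span (Or.inr ?_))
    exact ⟨n - 1 - j, by omega, by omega, rfl⟩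
  · rw [Algebra.algebraMap_eq_smul_one]
    exact Submodule.smul_mem _ _ (Submodule.subset_span (Or.inl rfl))
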